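/- For symmetric positive semidefinite R ∈ ℝ^{n×n} and B ∈ ℝ^{n×m}, the matrix R + BBᵀ is positive definite if and only if the block matrix [R B] ∈ ℝ^{n×(n+m)} has rank n. -/

import Mathlib

open Matrix

/-- for symmetric PSD `R`, the matrix `R + BBᵀ` is positive
definite iff the block matrix `[R B]` has full rank `n`. -/
theorem stmt4 {n m : ℕ}
    (R : Matrix (Fin n) (Fin n) ℝ) (B : Matrix (Fin n) (Fin m) ℝ)
    (hR : R.PosSemidef) :
    (R + B * Bᵀ).PosDef ↔ (Matrix.fromCols R B).rank = n := by
  have hBBt : (B * Bᵀ).PosSemidef := by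
    simpa using posSemidef_self_mul_conjTranspose B
  have hker : ∀ x : Fin n → ℝ, ((fromCols R B)ᵀ *ᵥ x = 0) ↔ (R *ᵥ x = 0 ∧ Bᵀ *ᵥ x = 0) := by
    intro x
    rw [transpose_fromCols, fromRows_mulVec, funext_iff, Sum.forall]
    have hRsymm : Rᵀ = R := by simpa using hR.1.eq
    simp [funext_iff, hRsymm]
  have hrank : (fromCols R B).rank = n ↔
      ∀ x : Fin n → ℝ, ((fromCols R B)ᵀ *ᵥ x = 0) → x = 0 := by
    rw [← rank_transpose]
    set A := (fromCols R B)ᵀ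
    have h := LinearMap.finrank_range_add_finrank_ker A.mulVecLin
    rw [Module.finrank_pi] at h
    simp only [Fintype.card_fin] at h
    rw [Matrix.rank]
    constructor
    · intro hr x hx
      have hk : LinearMap.ker A.mulVecLin = ⊥ := by
        rw [← Submodule.finrank_eq_zero (R := ℝ)]
        omega
      have : x ∈ LinearMap.ker A.mulVecLin := by
        simpa [LinearMap.mem_ker, mulVecLin_apply] using hx
      simpa [hk] using this
    · intro hx
      have hk : LinearMap.ker A.mulVecLin = ⊥ := by
        rw [LinearMap.ker_eq_bot']
        intro x hxk
        exact hx x (by simpa [mulVecLin_apply] using hxk)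
      rw [hk] at h
      simpa using h
  rw [hrank]
  constructor
  · intro hPD x hx
    obtain ⟨h1, h2⟩ := (hker x).mp hx
    by_contra hx0
    have := hPD.dotProduct_mulVec_pos hx0
    rw [add_mulVec, h1] at this
    have hB : (B * Bᵀ) *ᵥ x = 0 := by
      rw [← mulVec_mulVec, h2, mulVec_zero]
    rw [hB] at this
    simp at this
  · intro hinj
    refine PosDef.of_dotProduct_mulVec_pos (hR.add hBBt).isHermitian (fun x hx0 => ?_)
    have hge := (hR.add hBBt).dotProduct_mulVec_nonneg x
    rcases lt_or_eq_of_le hge with h | h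
    · simpa using h
    · exfalso
      apply hx0
      apply hinj
      rw [hker x]
      have hsum : x ⬝ᵥ R *ᵥ x + x ⬝ᵥ (B * Bᵀ) *ᵥ x = 0 := by
        simpa [add_mulVec, dotProduct_add] using h.symm
      have h1 := hR.dotProduct_mulVec_nonneg x
      have h2 := hBBt.dotProduct_mulVec_nonneg x
      simp only [star_trivial] at h1 h2
      have hq1 : x ⬝ᵥ R *ᵥ x = 0 := by linarith
      have hq2 : x ⬝ᵥ (B * Bᵀ) *ᵥ x = 0 := by linarith
      constructor
      · have := (hR.dotProduct_mulVec_zero_iff x).mp (by simpa using hq1)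
        exact this
      · have hdp : (Bᵀ *ᵥ x) ⬝ᵥ (Bᵀ *ᵥ x) = 0 := by
          rw [← mulVec_mulVec, dotProduct_mulVec, ← mulVec_transpose] at hq2
          exact hq2
        exact dotProduct_self_eq_zero.mp hdp
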